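/- Let (μ_k)_{k∈ℕ} be a sequence of pairwise distinct points of (0,1) satisfying the Carleson condition, and let ν = ∑_{k≥0} (1 − μ_k²) δ_{μ_k} be the associated discrete measure on [0,1). Assume that the family (t ↦ t^ℓ)_{ℓ∈ℕ} is a frame for L²(ν), and let (λ_n)_{n∈ℕ} be a sequence of positive real numbers. If the family (t ↦ t^{λ_n})_{n∈ℕ} is a frame for L²(ν), then both of the following hold: (1) ∑_{n≥0} 1/λ_n = ∞ (the Müntz–Szász condition); and (2) 0 < inf_k (1 − μ_k²) ∑_{n≥0} μ_k^{2λ_n} ≤ sup_k (1 − μ_k²) ∑_{n≥0} μ_k^{2λ_n} < ∞ (a Carleson-type condition). -/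

import Mathlib

open MeasureTheory

noncomputable section

/-- The Carleson (interpolation) condition for a sequence in the unit disc. -/
def CarlesonCondition (z : ℕ → ℂ) : Prop :=
  ∃ δ : ℝ, 0 < δ ∧ ∀ n : ℕ,
    δ ≤ ∏' k : {k : ℕ // k ≠ n}, ‖z n - z (k : ℕ)‖ / ‖1 - (starRingEnd ℂ) (z n) * z (k : ℕ)‖

/-- The discrete measure `ν = ∑ₖ (1 − μₖ²) δ_{μₖ}` on `[0,1) ⊆ ℝ`. -/
def discMeasure (μ : ℕ → ℝ) : Measure ℝ :=
  Measure.sum fun k => ENNReal.ofReal (1 - μ k ^ 2) • Measure.dirac (μ k)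

/-- The family of power functions `t ↦ t^{Λ n}` is a frame for `L²(ν)`. -/
def IsPowerFrameL2 (ν : Measure ℝ) (Λ : ℕ → ℝ) : Prop :=
  ∃ A B : ℝ, 0 < A ∧ A ≤ B ∧ ∀ f : ℝ → ℂ, MemLp f 2 ν →
    A * (∫ t, ‖f t‖ ^ 2 ∂ν) ≤ ∑' n : ℕ, ‖∫ t, f t * ((t ^ Λ n : ℝ) : ℂ) ∂ν‖ ^ 2 ∧
    ∑' n : ℕ, ‖∫ t, f t * ((t ^ Λ n : ℝ) : ℂ) ∂ν‖ ^ 2 ≤ B * (∫ t, ‖f t‖ ^ 2 ∂ν)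

open Filter

section Aux

lemma restrict_disc (μ : ℕ → ℝ) (hdist : Function.Injective μ) (k : ℕ) :
    (discMeasure μ).restrict {μ k} =
      ENNReal.ofReal (1 - μ k ^ 2) • Measure.dirac (μ k) := by
  rw [discMeasure, Measure.restrict_sum _ (measurableSet_singleton _)]
  ext s hs
  rw [Measure.sum_apply _ hs]
  have h1 : ∀ j : ℕ, j ≠ k →
      ((ENNReal.ofReal (1 - μ j ^ 2) • Measure.dirac (μ j)).restrict {μ k}) s = 0 := by
    intro j hj
    have : μ j ∉ ({μ k} : Set ℝ) := by
      simp only [Set.mem_singleton_iff]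
      exact fun h => hj (hdist h)
    classical
    rw [Measure.restrict_smul, MeasureTheory.restrict_dirac, if_neg this]
    simp
  rw [tsum_eq_single k h1]
  have : μ k ∈ ({μ k} : Set ℝ) := rfl
  classical
  rw [Measure.restrict_smul, MeasureTheory.restrict_dirac, if_pos this]

lemma integral_disc_indicator {E : Type*} [NormedAddCommGroup E] [NormedSpace ℝ E]
    [CompleteSpace E]
    (μ : ℕ → ℝ) (hμ : ∀ k, μ k ∈ Set.Ioo (0:ℝ) 1) (hdist : Function.Injective μ)
    (k : ℕ) (w : ℝ → E) :
    ∫ t, Set.indicator {μ k} w t ∂(discMeasure μ) = (1 - μ k ^ 2) • w (μ k) := by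
  rw [MeasureTheory.integral_indicator (measurableSet_singleton _),
    restrict_disc μ hdist k, integral_smul_measure, integral_dirac,
    ENNReal.toReal_ofReal]
  nlinarith [(hμ k).1, (hμ k).2]

lemma disc_singleton (μ : ℕ → ℝ) (hdist : Function.Injective μ) (k : ℕ) :
    (discMeasure μ) {μ k} = ENNReal.ofReal (1 - μ k ^ 2) := by
  have := congrArg (fun m : Measure ℝ => m {μ k}) (restrict_disc μ hdist k)
  simpa [Measure.restrict_apply, (measurableSet_singleton (μ k))] using this

lemma frame_bounds (μ : ℕ → ℝ) (hμ : ∀ k, μ k ∈ Set.Ioo (0:ℝ) 1)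
    (hdist : Function.Injective μ) (lam : ℕ → ℝ)
    {A B : ℝ}
    (h : ∀ f : ℝ → ℂ, MemLp f 2 (discMeasure μ) →
      A * (∫ t, ‖f t‖ ^ 2 ∂(discMeasure μ)) ≤
        ∑' n : ℕ, ‖∫ t, f t * ((t ^ lam n : ℝ) : ℂ) ∂(discMeasure μ)‖ ^ 2 ∧
      ∑' n : ℕ, ‖∫ t, f t * ((t ^ lam n : ℝ) : ℂ) ∂(discMeasure μ)‖ ^ 2 ≤
        B * (∫ t, ‖f t‖ ^ 2 ∂(discMeasure μ))) (k : ℕ) :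
    A ≤ (1 - μ k ^ 2) * ∑' n : ℕ, μ k ^ (2 * lam n) ∧
    (1 - μ k ^ 2) * ∑' n : ℕ, μ k ^ (2 * lam n) ≤ B := by
  obtain ⟨hμ0, hμ1⟩ := hμ k
  have hck : 0 < 1 - μ k ^ 2 := by nlinarith
  set c := 1 - μ k ^ 2 with hc
  set f : ℝ → ℂ := Set.indicator {μ k} (fun _ => (1:ℂ)) with hf
  have hmem : MemLp f 2 (discMeasure μ) := by
    refine memLp_indicator_const 2 (measurableSet_singleton _) 1 (Or.inr ?_)
    rw [disc_singleton μ hdist k]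
    exact ENNReal.ofReal_ne_top
  have hint1 : (∫ t, ‖f t‖ ^ 2 ∂(discMeasure μ)) = c := by
    have : (fun t => ‖f t‖ ^ 2) = Set.indicator {μ k} (fun _ => (1:ℝ)) := by
      funext t
      by_cases ht : t ∈ ({μ k} : Set ℝ) <;> simp only [Set.mem_singleton_iff] at ht <;>
        simp [hf, Set.indicator_of_mem, Set.indicator_of_notMem, ht, Pi.single_apply]
    rw [this, integral_disc_indicator μ hμ hdist k, smul_eq_mul, mul_one]
  have hint2 : ∀ n, (∫ t, f t * ((t ^ lam n : ℝ) : ℂ) ∂(discMeasure μ))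
      = c • ((μ k ^ lam n : ℝ) : ℂ) := by
    intro n
    have : (fun t => f t * ((t ^ lam n : ℝ) : ℂ))
        = Set.indicator {μ k} (fun t => ((t ^ lam n : ℝ) : ℂ)) := by
      funext t
      by_cases ht : t ∈ ({μ k} : Set ℝ) <;> simp only [Set.mem_singleton_iff] at ht <;>
        simp [hf, Set.indicator_of_mem, Set.indicator_of_notMem, ht, Pi.single_apply]
    rw [this, integral_disc_indicator μ hμ hdist k]
  have hnorm : ∀ n, ‖∫ t, f t * ((t ^ lam n : ℝ) : ℂ) ∂(discMeasure μ)‖ ^ 2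
      = c ^ 2 * μ k ^ (2 * lam n) := by
    intro n
    rw [hint2 n]
    have h1 : ‖c • ((μ k ^ lam n : ℝ) : ℂ)‖ = c * μ k ^ lam n := by
      rw [norm_smul, Complex.norm_real, Real.norm_eq_abs, Real.norm_eq_abs,
        abs_of_pos hck, abs_of_nonneg (Real.rpow_nonneg hμ0.le _)]
    rw [h1]
    have h2 : μ k ^ (2 * lam n) = (μ k ^ lam n) ^ 2 := by
      rw [mul_comm, Real.rpow_mul hμ0.le]
      norm_num
    rw [h2]; ring
  have htsum : ∑' n : ℕ, ‖∫ t, f t * ((t ^ lam n : ℝ) : ℂ) ∂(discMeasure μ)‖ ^ 2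
      = c ^ 2 * ∑' n : ℕ, μ k ^ (2 * lam n) := by
    simp_rw [hnorm]
    exact tsum_mul_left
  obtain ⟨hl, hr⟩ := h f hmem
  rw [hint1, htsum] at hl hr
  constructor
  · nlinarith [hl]
  · nlinarith [hr]

/-- tprod of factors in `[0,1]` is at most any single factor. -/
lemma tprod_le_single {ι : Type*} [DecidableEq ι] (F : ι → ℝ) (h0 : ∀ i, 0 ≤ F i)
    (h1 : ∀ i, F i ≤ 1) (j : ι) : ∏' i, F i ≤ F j := by
  set P : Finset ι → ℝ := fun s => ∏ i ∈ s, F i with hP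
  have hanti : Antitone P := by
    intro s t hst
    rw [hP]
    simp only
    rw [← Finset.prod_sdiff hst]
    have h1' : ∏ i ∈ t \ s, F i ≤ 1 :=
      Finset.prod_le_one (fun i _ => h0 i) (fun i _ => h1 i)
    have h0' : 0 ≤ ∏ i ∈ s, F i := Finset.prod_nonneg fun i _ => h0 i
    nlinarith [Finset.prod_nonneg (fun i (_ : i ∈ t \ s) => h0 i)]
  have hbdd : BddBelow (Set.range P) := by
    refine ⟨0, ?_⟩
    rintro x ⟨s, rfl⟩
    exact Finset.prod_nonneg fun i _ => h0 i
  have hprod : HasProd F (⨅ s : Finset ι, P s) := tendsto_atTop_ciInf hanti hbdd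
  rw [hprod.tprod_eq]
  calc (⨅ s : Finset ι, P s) ≤ P {j} := ciInf_le hbdd {j}
    _ = F j := Finset.prod_singleton F j

lemma carleson_exists_big (μ : ℕ → ℝ) (hμ : ∀ k, μ k ∈ Set.Ioo (0:ℝ) 1)
    (hcarleson : CarlesonCondition fun k => (μ k : ℂ)) :
    ∀ x : ℝ, x < 1 → ∃ k, x < μ k := by
  obtain ⟨δ, hδ, hcar⟩ := hcarleson
  have hfac : ∀ n k : ℕ, k ≠ n → δ ≤ |μ n - μ k| / (1 - μ n * μ k) := by
    intro n k hk
    have h0 : ∀ i : {k : ℕ // k ≠ n},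
        0 ≤ ‖((μ n : ℂ)) - (μ (i:ℕ) : ℂ)‖ / ‖1 - (starRingEnd ℂ) ((μ n : ℂ)) * (μ (i:ℕ) : ℂ)‖ :=
      fun i => div_nonneg (norm_nonneg _) (norm_nonneg _)
    have hval : ∀ i : {k : ℕ // k ≠ n},
        ‖((μ n : ℂ)) - (μ (i:ℕ) : ℂ)‖ / ‖1 - (starRingEnd ℂ) ((μ n : ℂ)) * (μ (i:ℕ) : ℂ)‖
          = |μ n - μ (i:ℕ)| / (1 - μ n * μ (i:ℕ)) := by
      intro i
      obtain ⟨hn0, hn1⟩ := hμ n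
      obtain ⟨hi0, hi1⟩ := hμ (i:ℕ)
      have h2 : ((μ n : ℂ)) - (μ (i:ℕ) : ℂ) = ((μ n - μ (i:ℕ) : ℝ) : ℂ) := by push_cast; ring
      have h3 : 1 - (starRingEnd ℂ) ((μ n : ℂ)) * (μ (i:ℕ) : ℂ)
          = ((1 - μ n * μ (i:ℕ) : ℝ) : ℂ) := by
        rw [Complex.conj_ofReal]; push_cast; ring
      rw [h2, h3, Complex.norm_real, Complex.norm_real, Real.norm_eq_abs, Real.norm_eq_abs,
        abs_of_pos (by nlinarith : (0:ℝ) < 1 - μ n * μ (i:ℕ))]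
    have h1 : ∀ i : {k : ℕ // k ≠ n},
        ‖((μ n : ℂ)) - (μ (i:ℕ) : ℂ)‖ / ‖1 - (starRingEnd ℂ) ((μ n : ℂ)) * (μ (i:ℕ) : ℂ)‖ ≤ 1 := by
      intro i
      rw [hval i]
      obtain ⟨hn0, hn1⟩ := hμ n
      obtain ⟨hi0, hi1⟩ := hμ (i:ℕ)
      rw [div_le_one (by nlinarith)]
      rw [abs_le]
      constructor <;> nlinarith
    calc δ ≤ _ := hcar n
      _ ≤ _ := tprod_le_single _ h0 h1 ⟨k, hk⟩
      _ = |μ n - μ k| / (1 - μ n * μ k) := hval ⟨k, hk⟩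
  intro x hx
  by_contra hcon
  push_neg at hcon
  have hx0 : 0 < x := lt_of_lt_of_le (hμ 0).1 (hcon 0)
  have hmem : ∀ k, μ k ∈ Set.Icc (0:ℝ) x := fun k => ⟨(hμ k).1.le, hcon k⟩
  obtain ⟨a, _, φ, hφ, hconv⟩ := tendsto_subseq_of_bounded
    (Metric.isBounded_Icc (0:ℝ) x) hmem
  have hcauchy := hconv.cauchySeq
  rw [Metric.cauchySeq_iff] at hcauchy
  have hεpos : 0 < δ * (1 - x * x) := mul_pos hδ (by nlinarith)
  obtain ⟨N, hN⟩ := hcauchy (δ * (1 - x * x)) hεpos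
  have hne : φ (N+1) ≠ φ N := fun h => by simpa using hφ.injective h
  have hd : dist (μ (φ N)) (μ (φ (N+1))) < δ * (1 - x * x) :=
    hN N le_rfl (N+1) (Nat.le_succ N)
  have hfk := hfac (φ N) (φ (N+1)) hne
  have hmn := hmem (φ N); have hmk := hmem (φ (N+1))
  have hden : 0 < 1 - x * x := by nlinarith
  have hden2 : 1 - x * x ≤ 1 - μ (φ N) * μ (φ (N+1)) := by
    have := (hμ (φ N)).1; have := (hμ (φ (N+1))).1
    nlinarith [hmn.2, hmk.2]
  have habs : |μ (φ N) - μ (φ (N+1))| < δ * (1 - x * x) := by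
    rw [Real.dist_eq] at hd; exact hd
  have : δ ≤ |μ (φ N) - μ (φ (N+1))| / (1 - μ (φ N) * μ (φ (N+1))) := hfk
  have hlt : |μ (φ N) - μ (φ (N+1))| / (1 - μ (φ N) * μ (φ (N+1))) < δ := by
    rw [div_lt_iff₀ (by linarith)]
    calc |μ (φ N) - μ (φ (N+1))| < δ * (1 - x * x) := habs
      _ ≤ δ * (1 - μ (φ N) * μ (φ (N+1))) := by nlinarith
  linarith

lemma key_ineq (x : ℝ) (hx0 : 0 < x) (hx1 : x < 1) (l : ℝ) (hl : 0 < l) :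
    (1 - x ^ 2) * x ^ (2 * l) ≤ (Real.exp 1 * l)⁻¹ := by
  have h1 : x ^ (2 * l) ≤ Real.exp (-(2 * l) * (1 - x)) := by
    rw [Real.rpow_def_of_pos hx0]
    apply Real.exp_le_exp.mpr
    have hlog := Real.log_le_sub_one_of_pos hx0
    nlinarith
  have h2 : 1 - x ^ 2 ≤ 2 * (1 - x) := by nlinarith
  set u := 2 * l * (1 - x) with hu
  have hu0 : 0 ≤ u := by nlinarith
  have hue : u * Real.exp (-u) ≤ (Real.exp 1)⁻¹ := by
    have h3 : u ≤ Real.exp (u - 1) := by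
      have := Real.add_one_le_exp (u - 1); linarith
    have h4 : Real.exp (u - 1) = Real.exp u * (Real.exp 1)⁻¹ := by
      rw [Real.exp_sub]; rw [div_eq_mul_inv]
    have h5 : Real.exp (-u) = (Real.exp u)⁻¹ := Real.exp_neg u
    have hup : 0 < Real.exp u := Real.exp_pos u
    rw [h5]
    rw [h4] at h3
    have := mul_le_mul_of_nonneg_right h3 (le_of_lt (inv_pos.mpr hup))
    calc u * (Real.exp u)⁻¹ ≤ Real.exp u * (Real.exp 1)⁻¹ * (Real.exp u)⁻¹ := this
      _ = (Real.exp 1)⁻¹ := by field_simp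
  have hexp0 : 0 ≤ Real.exp (-(2 * l) * (1 - x)) := (Real.exp_pos _).le
  have hx2 : 0 ≤ 1 - x ^ 2 := by nlinarith
  calc (1 - x ^ 2) * x ^ (2 * l)
      ≤ (2 * (1 - x)) * Real.exp (-(2 * l) * (1 - x)) := by
        apply mul_le_mul h2 h1 (Real.rpow_nonneg hx0.le _) (by linarith)
    _ = (u * Real.exp (-u)) / l := by
        rw [hu]
        have : -(2 * l) * (1 - x) = -(2 * l * (1 - x)) := by ring
        rw [this]
        field_simp
    _ ≤ (Real.exp 1)⁻¹ / l := by gcongr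
    _ = (Real.exp 1 * l)⁻¹ := by rw [mul_inv]; ring

end Aux

theorem necessary_conditions_for_power_frame
    (μ : ℕ → ℝ) (hμ : ∀ k, μ k ∈ Set.Ioo (0 : ℝ) 1) (hdist : Function.Injective μ)
    (hcarleson : CarlesonCondition fun k => (μ k : ℂ))
    (hnat : IsPowerFrameL2 (discMeasure μ) fun ℓ : ℕ => (ℓ : ℝ))
    (lam : ℕ → ℝ) (hlam : ∀ n, 0 < lam n)
    (hframe : IsPowerFrameL2 (discMeasure μ) lam) :
    (¬ Summable fun n : ℕ => 1 / lam n) ∧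
    ∃ c C : ℝ, 0 < c ∧ c ≤ C ∧ ∀ k : ℕ,
      c ≤ (1 - μ k ^ 2) * ∑' n : ℕ, μ k ^ (2 * lam n) ∧
      (1 - μ k ^ 2) * ∑' n : ℕ, μ k ^ (2 * lam n) ≤ C := by
  obtain ⟨A, B, hA, hAB, hfr⟩ := hframe
  have hbd := frame_bounds μ hμ hdist lam hfr
  refine ⟨?_, A, B, hA, hAB, hbd⟩
  intro hS
  have hbig := carleson_exists_big μ hμ hcarleson
  have hchoice : ∀ j : ℕ, ∃ k, 1 - 1 / (j + 1 : ℝ) < μ k := by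
    intro j
    apply hbig
    have : 0 < 1 / (j + 1 : ℝ) := by positivity
    linarith
  choose k hk using hchoice
  have htend : Filter.Tendsto (fun j => μ (k j)) Filter.atTop (nhds 1) := by
    have hlow : Filter.Tendsto (fun j : ℕ => 1 - 1 / (j + 1 : ℝ)) Filter.atTop (nhds 1) := by
      have h0 : Filter.Tendsto (fun j : ℕ => 1 / (j + 1 : ℝ)) Filter.atTop (nhds 0) :=
        tendsto_one_div_add_atTop_nhds_zero_nat
      have := (tendsto_const_nhds (x := (1:ℝ)) (f := Filter.atTop (α := ℕ))).sub h0
      simpa using this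
    exact tendsto_of_tendsto_of_tendsto_of_le_of_le hlow tendsto_const_nhds
      (fun j => (hk j).le) (fun j => (hμ (k j)).2.le)
  -- dominated convergence for the tsums
  set G : ℕ → ℕ → ℝ := fun j n => (1 - μ (k j) ^ 2) * μ (k j) ^ (2 * lam n) with hG
  have hGnonneg : ∀ j n, 0 ≤ G j n := by
    intro j n
    have := (hμ (k j)).1; have := (hμ (k j)).2
    have h1 : 0 ≤ 1 - μ (k j) ^ 2 := by nlinarith
    exact mul_nonneg h1 (Real.rpow_nonneg (hμ (k j)).1.le _)
  have hbound : ∀ j n, ‖G j n‖ ≤ (Real.exp 1 * lam n)⁻¹ := by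
    intro j n
    rw [Real.norm_eq_abs, abs_of_nonneg (hGnonneg j n)]
    exact key_ineq _ (hμ (k j)).1 (hμ (k j)).2 _ (hlam n)
  have hsummable : Summable fun n => (Real.exp 1 * lam n)⁻¹ := by
    refine Summable.congr (hS.mul_left (Real.exp 1)⁻¹) ?_
    intro n
    rw [mul_inv]
    field_simp
  have hptwise : ∀ n, Filter.Tendsto (fun j => G j n) Filter.atTop (nhds 0) := by
    intro n
    have hup : Filter.Tendsto (fun j => 1 - μ (k j) ^ 2) Filter.atTop (nhds 0) := by
      have := (tendsto_const_nhds (x := (1:ℝ)) (f := Filter.atTop (α := ℕ))).sub (htend.pow 2)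
      simpa using this
    refine tendsto_of_tendsto_of_tendsto_of_le_of_le tendsto_const_nhds hup
      (fun j => hGnonneg j n) (fun j => ?_)
    have h1 : 0 ≤ 1 - μ (k j) ^ 2 := by
      have := (hμ (k j)).2; have := (hμ (k j)).1; nlinarith
    have h2 : μ (k j) ^ (2 * lam n) ≤ 1 :=
      Real.rpow_le_one (hμ (k j)).1.le (hμ (k j)).2.le (by linarith [hlam n])
    calc G j n ≤ (1 - μ (k j) ^ 2) * 1 := by
          exact mul_le_mul_of_nonneg_left h2 h1
      _ = 1 - μ (k j) ^ 2 := mul_one _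
  have hts : Filter.Tendsto (fun j => ∑' n, G j n) Filter.atTop (nhds (∑' _ : ℕ, (0:ℝ))) :=
    tendsto_tsum_of_dominated_convergence hsummable hptwise
      (Filter.Eventually.of_forall hbound)
  rw [tsum_zero] at hts
  have hAle : ∀ j, A ≤ ∑' n, G j n := by
    intro j
    have := (hbd (k j)).1
    rwa [← tsum_mul_left] at this
  have : A ≤ 0 := ge_of_tendsto hts (Filter.Eventually.of_forall hAle)
  linarith
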